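/- The map Φ_τ defined implicitly by u^{n+1} = e^{−τ∂_x³}u^n + (1/24)(∂_x^{−1}u^{n+1} + e^{−τ∂_x³}∂_x^{−1}u^n)² − (1/24)e^{−τ∂_x³}(e^{τ∂_x³}∂_x^{−1}u^{n+1} + ∂_x^{−1}u^n)² is symmetric: Φ_τ = Φ_{−τ}^{−1}, i.e. if u^{n+1} = Φ_τ(u^n) then u^n = Φ_{−τ}(u^{n+1}). -/
import Mathlib


/-- Symmetry of the implicit resonance-based midpoint scheme: if
`u^{n+1} = Φ_τ(u^n)` then `u^n = Φ_{-τ}(u^{n+1})`. Here `E t` is the Airy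
propagator `e^{t∂ₓ³}` (a one-parameter group of linear maps on the algebra of
zero-mean functions) and `P` is the antiderivative `∂ₓ⁻¹`. -/
theorem resonance_midpoint_symmetric (A : Type*) [CommRing A] [Algebra ℂ A]
    (E : ℝ → A →ₗ[ℂ] A) (P : A →ₗ[ℂ] A)
    (hE0 : E 0 = LinearMap.id)
    (hEadd : ∀ σ τ : ℝ, (E σ).comp (E τ) = E (σ + τ))
    (τ : ℝ) (un un1 : A)
    (h : un1 = E (-τ) un
        + (1 / 24 : ℂ) • (P un1 + E (-τ) (P un)) ^ 2
        - (1 / 24 : ℂ) • (E (-τ) ((E τ (P un1) + P un) ^ 2))) :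
    un = E τ un1
        + (1 / 24 : ℂ) • (P un + E τ (P un1)) ^ 2
        - (1 / 24 : ℂ) • (E τ ((E (-τ) (P un) + P un1) ^ 2)) := by
  have key : ∀ x : A, E τ (E (-τ) x) = x := by
    intro x
    have := congrArg (fun f : A →ₗ[ℂ] A => f x) (hEadd τ (-τ))
    simpa [hE0] using this
  have h2 := congrArg (E τ) h
  simp only [map_add, map_sub, map_smul, key] at h2
  rw [h2]
  ring_nf
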